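/- Let A be a C*-algebra, K a closed essential ideal, S a closed semiregular operator on A. Then the adjoint of the restriction equals the restriction of the adjoint: (S|_K)* = S*|_K, where adjoints are taken with respect to the A-valued (resp. K-valued) inner product ⟨a,b⟩ = a*b. -/
import Mathlib


/-- A densely defined operator on a C*-algebra `A`, presented by a total function `toFun`
whose meaningful values are those on its domain `dom`.  The domain is a dense right ideal,
on which the operator is `ℂ`-linear and right `A`-linear (`S(a b) = (S a) b`). -/
structure UnboundedOp (A : Type*) [NonUnitalCStarAlgebra A] where
  dom : Set A
  toFun : A → A
  dense_dom : Dense dom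
  zero_mem : (0 : A) ∈ dom
  add_mem : ∀ a ∈ dom, ∀ b ∈ dom, a + b ∈ dom
  smul_mem : ∀ (c : ℂ), ∀ a ∈ dom, c • a ∈ dom
  mul_mem : ∀ a ∈ dom, ∀ x : A, a * x ∈ dom
  map_add' : ∀ a ∈ dom, ∀ b ∈ dom, toFun (a + b) = toFun a + toFun b
  map_smul' : ∀ (c : ℂ), ∀ a ∈ dom, toFun (c • a) = c • toFun a
  map_mul' : ∀ a ∈ dom, ∀ x : A, toFun (a * x) = toFun a * x

namespace UnboundedOp

variable {A : Type*} [NonUnitalCStarAlgebra A]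

/-- The domain of the adjoint of `S`, with respect to the `A`-valued inner
product `⟨a, b⟩ = a* b` on `A`: those `a` admitting `c` with `⟨c, b⟩ = ⟨a, S b⟩`
for all `b` in the domain of `S`. -/
def adjDom (S : UnboundedOp A) : Set A :=
  {a : A | ∃ c : A, ∀ b ∈ S.dom, star a * S.toFun b = star c * b}

/-- `S` is semiregular if (it is closable, which is automatic here, and) its
adjoint is densely defined. -/
def Semiregular (S : UnboundedOp A) : Prop := Dense S.adjDom

/-- `S` is a closed operator if its graph is closed. -/
def IsClosedOp (S : UnboundedOp A) : Prop :=
  IsClosed {p : A × A | p.1 ∈ S.dom ∧ p.2 = S.toFun p.1}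

end UnboundedOp

/-- An ideal `K` of `A` is essential if it has trivial annihilator. -/
def TwoSidedIdeal.Essential {A : Type*} [NonUnitalCStarAlgebra A] (K : TwoSidedIdeal A) : Prop :=
  ∀ a : A, (∀ k ∈ K, a * k = 0) → a = 0

open scoped NNReal

/-- Closed two-sided ideals in a C*-algebra are "hereditary": if `y* y ∈ K` then `y ∈ K`. -/
lemma mem_of_star_mul_self_mem {A : Type*} [NonUnitalCStarAlgebra A]
    (K : TwoSidedIdeal A) (hKc : IsClosed (K : Set A)) (y : A)
    (h : star y * y ∈ K) : y ∈ K := by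
  set x := star y * y with hx_def
  have hx_sa : IsSelfAdjoint x := by
    rw [hx_def]; simp [IsSelfAdjoint, star_mul]
  have hspec : ∀ t ∈ quasispectrum ℝ x, 0 ≤ t := by
    intro t ht
    rw [Unitization.quasispectrum_eq_spectrum_inr' ℝ ℂ] at ht
    have hx' : ((x : A) : Unitization ℂ A)
        = star (y : Unitization ℂ A) * (y : Unitization ℂ A) := by
      rw [hx_def, Unitization.inr_mul, Unitization.inr_star]
    rw [hx'] at ht
    exact spectrum_star_mul_self_nonneg t ht
  have hmem : y ∈ closure (K : Set A) := by
    rw [Metric.mem_closure_iff]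
    intro ε hε
    set s : ℝ := 2 / ε ^ 2 with hs_def
    have hs : 0 < s := by positivity
    set N : ℝ := s ^ 2 with hN_def
    have hN : 0 < N := by positivity
    set f : ℝ → ℝ := fun t => N * t ^ 2 / (1 + N * t ^ 2) with hf_def
    set g : ℝ → ℝ := fun t => N * t / (1 + N * t ^ 2) with hg_def
    have hden : ∀ t : ℝ, 0 < 1 + N * t ^ 2 := fun t => by positivity
    have hfc : Continuous f := by
      apply Continuous.div (by fun_prop) (by fun_prop) fun t => (hden t).ne'
    have hgc : Continuous g := by
      apply Continuous.div (by fun_prop) (by fun_prop) fun t => (hden t).ne'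
    have hf0 : f 0 = 0 := by simp [hf_def]
    have hg0 : g 0 = 0 := by simp [hg_def]
    set k : A := cfcₙ f x with hk_def
    have hk_sa : IsSelfAdjoint k := cfcₙ_predicate f x
    have hkK : k ∈ K := by
      have hfg : f = fun t => t * g t := by
        funext t; rw [hf_def, hg_def]; ring
      have h1 : cfcₙ (fun t : ℝ => t * g t) x = x * cfcₙ g x := by
        rw [cfcₙ_mul (fun t : ℝ => t) g x continuous_id.continuousOn rfl
          hgc.continuousOn hg0, cfcₙ_id' ℝ x hx_sa]
      rw [hk_def, hfg, h1]
      exact K.mul_mem_right x _ h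
    -- the element `y * k` belongs to `K` and approximates `y`
    have hyk : y * k ∈ K := K.mul_mem_left y k hkK
    have hdd : star (y - y * k) * (y - y * k)
        = (x - x * k) - (k * x - k * x * k) := by
      rw [star_sub, star_mul, hk_sa.star_eq, hx_def]
      noncomm_ring
    have hxk : cfcₙ (fun t : ℝ => t * f t) x = x * k := by
      rw [cfcₙ_mul (fun t : ℝ => t) f x continuous_id.continuousOn rfl
        hfc.continuousOn hf0, cfcₙ_id' ℝ x hx_sa]
    have hkx : cfcₙ (fun t : ℝ => f t * t) x = k * x := by
      rw [cfcₙ_mul f (fun t : ℝ => t) x hfc.continuousOn hf0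
        continuous_id.continuousOn rfl, cfcₙ_id' ℝ x hx_sa]
    have hkxk : cfcₙ (fun t : ℝ => f t * t * f t) x = k * x * k := by
      rw [cfcₙ_mul (fun t : ℝ => f t * t) f x (hfc.mul continuous_id).continuousOn
        (by simp [hf0]) hfc.continuousOn hf0, hkx]
    have hmain : cfcₙ (fun t : ℝ => (t - t * f t) - (f t * t - f t * t * f t)) x
        = star (y - y * k) * (y - y * k) := by
      rw [cfcₙ_sub (fun t : ℝ => t - t * f t) (fun t : ℝ => f t * t - f t * t * f t) x
        (continuous_id.sub (continuous_id.mul hfc)).continuousOn (by simp [hf0])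
        (((hfc.mul continuous_id).sub ((hfc.mul continuous_id).mul hfc)).continuousOn)
        (by simp [hf0]),
        cfcₙ_sub (fun t : ℝ => t) (fun t : ℝ => t * f t) x continuous_id.continuousOn rfl
          (continuous_id.mul hfc).continuousOn (by simp [hf0]),
        cfcₙ_sub (fun t : ℝ => f t * t) (fun t : ℝ => f t * t * f t) x
          (hfc.mul continuous_id).continuousOn (by simp [hf0])
          ((hfc.mul continuous_id).mul hfc).continuousOn (by simp [hf0]),
        hxk, hkx, hkxk, cfcₙ_id' ℝ x hx_sa, hdd]
    have hbound : ‖star (y - y * k) * (y - y * k)‖ ≤ ε ^ 2 / 4 := by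
      rw [← hmain]
      apply norm_cfcₙ_le
      intro t ht
      have ht0 : 0 ≤ t := hspec t ht
      have hphi : (t - t * f t) - (f t * t - f t * t * f t)
          = t / (1 + N * t ^ 2) ^ 2 := by
        rw [hf_def]
        field_simp
        ring
      rw [hphi, Real.norm_eq_abs, abs_of_nonneg (by positivity)]
      have step1 : t / (1 + N * t ^ 2) ^ 2 ≤ t / (1 + N * t ^ 2) := by
        have h1le : 1 + N * t ^ 2 ≤ (1 + N * t ^ 2) ^ 2 :=
          le_self_pow₀ (by nlinarith [sq_nonneg t]) two_ne_zero
        gcongr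
      have step2 : t / (1 + N * t ^ 2) ≤ ε ^ 2 / 4 := by
        rw [div_le_iff₀ (hden t)]
        have hεne : ε ≠ 0 := hε.ne'
        have expand : ε ^ 2 / 4 * (1 + N * t ^ 2) - t = (ε / 2 - t / ε) ^ 2 := by
          rw [hN_def, hs_def]
          field_simp
          ring
        nlinarith [sq_nonneg (ε / 2 - t / ε)]
      linarith
    refine ⟨y * k, hyk, ?_⟩
    rw [dist_eq_norm]
    have hnn := norm_nonneg (y - y * k)
    have hsq : ‖y - y * k‖ * ‖y - y * k‖ ≤ ε ^ 2 / 4 := by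
      rw [← CStarRing.norm_star_mul_self]
      exact hbound
    nlinarith
  rwa [hKc.closure_eq] at hmem

/-- `(S|_K)* = S*|_K`: for `a ∈ K`, the element `c` is a value of the adjoint of the
restriction `S|_K` (with respect to the `K`-valued inner product) if and only if it is a
value of the adjoint `S*` at `a`. -/

theorem stmt_5 {A : Type*} [NonUnitalCStarAlgebra A]
    (K : TwoSidedIdeal A) (hKc : IsClosed (K : Set A)) (hKe : K.Essential)
    (S : UnboundedOp A) (hS : S.Semiregular) (hSc : S.IsClosedOp) :
    ∀ a ∈ K, ∀ c : A,
      ((c ∈ K ∧ ∀ b ∈ S.dom, b ∈ K → star a * S.toFun b = star c * b) ↔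
        (∀ b ∈ S.dom, star a * S.toFun b = star c * b)) := by

  intro a ha c
  constructor
  · rintro ⟨hcK, hres⟩ b hb
    refine sub_eq_zero.mp (hKe _ fun k hk => ?_)
    have hbk : b * k ∈ S.dom := S.mul_mem b hb k
    have hbkK : b * k ∈ K := K.mul_mem_left b k hk
    have hEq := hres (b * k) hbk hbkK
    rw [S.map_mul' b hb k] at hEq
    rw [sub_mul, mul_assoc, mul_assoc, hEq, sub_self]
  · intro h
    refine ⟨?_, fun b hb _ => h b hb⟩
    have haK : star a ∈ K := by
      refine mem_of_star_mul_self_mem K hKc (star a) ?_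
      rw [star_star]
      exact K.mul_mem_right a _ ha
    have hKb : ∀ b : A, star c * b ∈ K := by
      intro b
      obtain ⟨u, hu_mem, hu_lim⟩ := mem_closure_iff_seq_limit.mp (S.dense_dom b)
      have hn : ∀ n, star c * u n ∈ K := by
        intro n
        rw [← h (u n) (hu_mem n)]
        exact K.mul_mem_right (star a) _ haK
      have hcont : Filter.Tendsto (fun n => star c * u n) Filter.atTop (nhds (star c * b)) :=
        hu_lim.const_mul (star c)
      have : star c * b ∈ closure (K : Set A) :=
        mem_closure_of_tendsto hcont (Filter.Eventually.of_forall hn)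
      rwa [hKc.closure_eq] at this
    exact mem_of_star_mul_self_mem K hKc c (hKb c)
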